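/- Let Ω be a generic corner with parameter μ. If x ∈ Ω, r > 0 and B(x,r) ⊂ Ω, then for every t ≥ 0 one has B(x + t(a+b+c), r + μt) ⊂ Ω. -/

import Mathlib

noncomputable section

open MeasureTheory Metric Set

/-- ℝ³ as a Euclidean space. -/
abbrev E3 : Type := EuclideanSpace ℝ (Fin 3)

/-- Construct a vector of ℝ³ from its three coordinates. -/
def v3 (x y z : ℝ) : E3 := WithLp.toLp 2 ![x, y, z]

/-- The Euclidean dot product on ℝ³. -/
def dot3 (u v : E3) : ℝ := ∑ i : Fin 3, u i * v i

/-- The cross product on ℝ³. -/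
def cross3 (u v : E3) : E3 :=
  v3 (u 1 * v 2 - u 2 * v 1) (u 2 * v 0 - u 0 * v 2) (u 0 * v 1 - u 1 * v 0)

/-- Divergence of a vector field on ℝ³. -/
def divg (φ : E3 → E3) (x : E3) : ℝ :=
  ∑ i : Fin 3, fderiv ℝ φ x (EuclideanSpace.single i 1) i

/-- The set of test values defining the total variation of `χ` on `Ω`:
values `∫_Ω χ div φ` for `φ` a C¹ vector field compactly supported in `Ω` with `‖φ‖ ≤ 1`. -/
def tvSet (Ω : Set E3) (χ : E3 → ℝ) : Set ℝ :=
  {v : ℝ | ∃ φ : E3 → E3, ContDiff ℝ 1 φ ∧ HasCompactSupport φ ∧ tsupport φ ⊆ Ω ∧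
      (∀ x, ‖φ x‖ ≤ 1) ∧ v = ∫ x in Ω, χ x * divg φ x}

/-- The total variation `∫_Ω |∇χ|`. -/
def totalVariation (Ω : Set E3) (χ : E3 → ℝ) : ℝ := sSup (tvSet Ω χ)

/-- `χ ∈ BV(Ω, {0,1})`. -/
def IsBVIndicator (Ω : Set E3) (χ : E3 → ℝ) : Prop :=
  Measurable χ ∧ (∀ x, χ x = 0 ∨ χ x = 1) ∧ BddAbove (tvSet Ω χ)

/-- An admissible phase indicator `χ = (χ₁, χ₂, χ₃)`:
each `χᵢ ∈ BV(Ω, {0,1})` and `χ₁ + χ₂ + χ₃ ≤ 1`. -/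
def AdmissiblePhase (Ω : Set E3) (χ : Fin 3 → E3 → ℝ) : Prop :=
  (∀ i, IsBVIndicator Ω (χ i)) ∧ ∀ x, χ 0 x + χ 1 x + χ 2 x ≤ 1

/-- The volume `V = ∫_Ω (χ₁ + χ₂ + χ₃)` of the martensitic inclusion. -/
def phaseVolume (Ω : Set E3) (χ : Fin 3 → E3 → ℝ) : ℝ :=
  ∫ x in Ω, (χ 0 x + χ 1 x + χ 2 x)

/-- Squared Frobenius norm of a 3×3 matrix. -/
def frobSq (A : Matrix (Fin 3) (Fin 3) ℝ) : ℝ := ∑ i : Fin 3, ∑ j : Fin 3, (A i j) ^ 2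

/-- Symmetric part `e(A) = (A + Aᵀ)/2` of a matrix. -/
def matSym (A : Matrix (Fin 3) (Fin 3) ℝ) : Matrix (Fin 3) (Fin 3) ℝ :=
  (2⁻¹ : ℝ) • (A + A.transpose)

/-- The symmetrized gradient `e(u) = (∇u + ∇uᵀ)/2` of a displacement `u`. -/
def symGrad (u : E3 → E3) (x : E3) : Matrix (Fin 3) (Fin 3) ℝ :=
  Matrix.of fun i j =>
    (fderiv ℝ u x (EuclideanSpace.single j 1) i + fderiv ℝ u x (EuclideanSpace.single i 1) j) / 2

/-- Stress-free strain of the first martensite variant. -/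
def em1 : Matrix (Fin 3) (Fin 3) ℝ := Matrix.diagonal ![-2, 1, 1]

/-- Stress-free strain of the second martensite variant. -/
def em2 : Matrix (Fin 3) (Fin 3) ℝ := Matrix.diagonal ![1, -2, 1]

/-- Stress-free strain of the third martensite variant. -/
def em3 : Matrix (Fin 3) (Fin 3) ℝ := Matrix.diagonal ![1, 1, -2]

/-- The three stress-free strains of martensite. -/
def strains : Fin 3 → Matrix (Fin 3) (Fin 3) ℝ := ![em1, em2, em3]

/-- `Σᵢ χᵢ e⁽ⁱ⁾`. -/
def phaseStrain (χ : Fin 3 → E3 → ℝ) (x : E3) : Matrix (Fin 3) (Fin 3) ℝ :=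
  ∑ i : Fin 3, χ i x • strains i

/-- A (Sobolev-type) admissibility class for displacements: `u` and `∇u` are square
integrable on `Ω` and `u` is a.e. differentiable. Stands in for `H¹(Ω, ℝ³)`. -/
def IsH1 (Ω : Set E3) (u : E3 → E3) : Prop :=
  AEStronglyMeasurable u (volume.restrict Ω) ∧
  (∀ᵐ x ∂(volume.restrict Ω), DifferentiableAt ℝ u x) ∧
  IntegrableOn (fun x => ‖u x‖ ^ 2) Ω ∧
  IntegrableOn (fun x => ‖fderiv ℝ u x‖ ^ 2) Ω

/-- The elastic integral `∫_Ω |e(u) − Σᵢ χᵢ e⁽ⁱ⁾|² dx`. -/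
def elasticIntegral (Ω : Set E3) (χ : Fin 3 → E3 → ℝ) (u : E3 → E3) : ℝ :=
  ∫ x in Ω, frobSq (symGrad u x - phaseStrain χ x)

/-- The interfacial energy `E_interf[χ] = Σᵢ ∫_Ω |∇χᵢ|`. -/
def interfEnergy (Ω : Set E3) (χ : Fin 3 → E3 → ℝ) : ℝ :=
  ∑ i : Fin 3, totalVariation Ω (χ i)

/-- The elastic energy `E_elast[χ] = inf_{u ∈ H¹} ∫_Ω |e(u) − Σᵢ χᵢ e⁽ⁱ⁾|² dx`. -/
def elastEnergy (Ω : Set E3) (χ : Fin 3 → E3 → ℝ) : ℝ :=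
  sInf {v : ℝ | ∃ u : E3 → E3, IsH1 Ω u ∧ v = elasticIntegral Ω χ u}

/-- The total energy `E[χ] = E_interf[χ] + E_elast[χ]`. -/
def totalEnergy (Ω : Set E3) (χ : Fin 3 → E3 → ℝ) : ℝ :=
  interfEnergy Ω χ + elastEnergy Ω χ

/-- Twin/habit plane normals. -/
def nb12 : E3 := v3 (1 / Real.sqrt 2) (1 / Real.sqrt 2) 0
def nb21 : E3 := v3 (-(1 / Real.sqrt 2)) (1 / Real.sqrt 2) 0
def nb31 : E3 := v3 (1 / Real.sqrt 2) 0 (1 / Real.sqrt 2)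
def nb13 : E3 := v3 (1 / Real.sqrt 2) 0 (-(1 / Real.sqrt 2))
def nb23 : E3 := v3 0 (1 / Real.sqrt 2) (1 / Real.sqrt 2)
def nb32 : E3 := v3 0 (-(1 / Real.sqrt 2)) (1 / Real.sqrt 2)

/-- The corner domain `Ω = {αa + βb + γc : α, β, γ ≥ 0}`. -/
def corner (a b c : E3) : Set E3 :=
  {x | ∃ α β γ : ℝ, 0 ≤ α ∧ 0 ≤ β ∧ 0 ≤ γ ∧ x = α • a + β • b + γ • c}

/-- A generic corner: `a, b, c` are unit vectors in positive order such that the habit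
plane normal `n = b₂₃` cuts off the corner (`a·n, b·n, c·n > 0`). -/
def GenericCorner (a b c : E3) : Prop :=
  ‖a‖ = 1 ∧ ‖b‖ = 1 ∧ ‖c‖ = 1 ∧
  0 < dot3 (cross3 a b) c ∧ 0 < dot3 (cross3 b c) a ∧ 0 < dot3 (cross3 c a) b ∧
  0 < dot3 a nb23 ∧ 0 < dot3 b nb23 ∧ 0 < dot3 c nb23

/-- The parameter `μ` of the corner. -/
def cornerMu (a b c : E3) : ℝ :=
  min (dot3 (‖cross3 a b‖⁻¹ • cross3 a b) c)
    (min (dot3 (‖cross3 b c‖⁻¹ • cross3 b c) a) (dot3 (‖cross3 c a‖⁻¹ • cross3 c a) b))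

/-- `b₃ = (b₂₁ × b₃₂)/|b₂₁ × b₃₂|`. -/
def bb3v : E3 := ‖cross3 nb21 nb32‖⁻¹ • cross3 nb21 nb32

/-- `b₂ = (b₃₂ × b₃)/|b₃₂ × b₃|`. -/
def bb2v : E3 := ‖cross3 nb32 bb3v‖⁻¹ • cross3 nb32 bb3v

/-- `b₁ = (b₃ × b₂₁)/|b₃ × b₂₁|`. -/
def bb1v : E3 := ‖cross3 bb3v nb21‖⁻¹ • cross3 bb3v nb21

/-- The coordinates `yᵢ = x·bᵢ`. -/
def ycoord (i : Fin 3) (x : E3) : ℝ := dot3 x (![bb1v, bb2v, bb3v] i)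

/-- The box `C_R = {−R ≤ y₁ ≤ R, 0 ≤ y₂ ≤ R, 0 ≤ y₃ ≤ R}`. -/
def CRset (R : ℝ) : Set E3 :=
  {x | -R ≤ ycoord 0 x ∧ ycoord 0 x ≤ R ∧ 0 ≤ ycoord 1 x ∧ ycoord 1 x ≤ R ∧
       0 ≤ ycoord 2 x ∧ ycoord 2 x ≤ R}

/-- `C_R⁻ = C_R ∩ {y₁ ≤ 0}`. -/
def CRminus (R : ℝ) : Set E3 := CRset R ∩ {x | ycoord 0 x ≤ 0}

/-- `C_R⁺ = C_R ∩ {y₁ > 0}`. -/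
def CRplus (R : ℝ) : Set E3 := CRset R ∩ {x | 0 < ycoord 0 x}

/-- Matrices of the upper-bound construction. -/
def D1 : Matrix (Fin 3) (Fin 3) ℝ := Matrix.of ![![-2, 2, 0], ![-2, 1, 1], ![0, -1, 1]]
def D2 : Matrix (Fin 3) (Fin 3) ℝ := Matrix.of ![![1, -1, 0], ![1, -2, 1], ![0, -1, 1]]
def DM : Matrix (Fin 3) (Fin 3) ℝ := Matrix.of ![![0, 0, 0], ![0, -1, 1], ![0, -1, 1]]

/-- Tensor product `u ⊗ v` of two vectors. -/
def outer (u v : E3) : Matrix (Fin 3) (Fin 3) ℝ := Matrix.of fun i j => u i * v j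

/-- Symmetrized tensor product `u ⊙ v = (u⊗v + v⊗u)/2`. -/
def symOuter (u v : E3) : Matrix (Fin 3) (Fin 3) ℝ := (2⁻¹ : ℝ) • (outer u v + outer v u)



/-- Auxiliary lemmas for `ball_dilation_in_corner`. -/
private lemma dot3_cross_left' (u v : E3) : dot3 (cross3 u v) u = 0 := by
  simp [dot3, cross3, v3, Fin.sum_univ_three]; ring

private lemma dot3_cross_right' (u v : E3) : dot3 (cross3 u v) v = 0 := by
  simp [dot3, cross3, v3, Fin.sum_univ_three]; ring

private lemma dot3_sub_right' (N u v : E3) : dot3 N (u - v) = dot3 N u - dot3 N v := by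
  simp [dot3, Fin.sum_univ_three, PiLp.sub_apply]; ring

private lemma dot3_add_right' (N u v : E3) : dot3 N (u + v) = dot3 N u + dot3 N v := by
  simp [dot3, Fin.sum_univ_three, PiLp.add_apply]; ring

private lemma dot3_smul_right' (N : E3) (s : ℝ) (v : E3) : dot3 N (s • v) = s * dot3 N v := by
  simp [dot3, Fin.sum_univ_three, PiLp.smul_apply, smul_eq_mul]; ring

private lemma dot3_smul_left' (s : ℝ) (u v : E3) : dot3 (s • u) v = s * dot3 u v := by
  simp [dot3, Fin.sum_univ_three, PiLp.smul_apply, smul_eq_mul]; ring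

private lemma abs_dot3_le' (u v : E3) : |dot3 u v| ≤ ‖u‖ * ‖v‖ := by
  have : dot3 u v = inner ℝ u v := by
    simp [dot3, PiLp.inner_apply, RCLike.inner_apply, mul_comm]
  rw [this]; exact abs_real_inner_le_norm u v

private lemma dot3_self' (u : E3) : dot3 u u = ‖u‖ ^ 2 := by
  have : dot3 u u = inner ℝ u u := by
    have h2 : ∀ v : E3, dot3 u v = inner ℝ u v := by
      intro v; simp [dot3, PiLp.inner_apply, RCLike.inner_apply, mul_comm]
    exact h2 u
  rw [this, real_inner_self_eq_norm_sq]

private lemma triple1' (a b c : E3) : dot3 (cross3 b c) a = dot3 (cross3 a b) c := by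
  simp [dot3, cross3, v3, Fin.sum_univ_three]; ring

private lemma triple2' (a b c : E3) : dot3 (cross3 c a) b = dot3 (cross3 a b) c := by
  simp [dot3, cross3, v3, Fin.sum_univ_three]; ring

private lemma dot3_lincomb' (N a b c : E3) (α β γ : ℝ) :
    dot3 N (α • a + β • b + γ • c) = α * dot3 N a + β * dot3 N b + γ * dot3 N c := by
  simp [dot3, Fin.sum_univ_three, PiLp.add_apply, PiLp.smul_apply, smul_eq_mul]; ring

private lemma cramer' (a b c y : E3) (i : Fin 3) :
    dot3 (cross3 a b) c * y i =
      dot3 (cross3 b c) y * a i + dot3 (cross3 c a) y * b i + dot3 (cross3 a b) y * c i := by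
  fin_cases i <;> · simp [dot3, cross3, v3, Fin.sum_univ_three]; ring

private lemma mem_corner_of_dots' (a b c : E3) (hT : 0 < dot3 (cross3 a b) c)
    {y : E3} (h1 : 0 ≤ dot3 (cross3 b c) y) (h2 : 0 ≤ dot3 (cross3 c a) y)
    (h3 : 0 ≤ dot3 (cross3 a b) y) : y ∈ corner a b c := by
  set T := dot3 (cross3 a b) c with hTdef
  refine ⟨dot3 (cross3 b c) y / T, dot3 (cross3 c a) y / T, dot3 (cross3 a b) y / T,
    div_nonneg h1 hT.le, div_nonneg h2 hT.le, div_nonneg h3 hT.le, ?_⟩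
  ext i
  have key := cramer' a b c y i
  have hT0 : T ≠ 0 := ne_of_gt hT
  simp only [PiLp.add_apply, PiLp.smul_apply, smul_eq_mul]
  field_simp
  linarith [key]

private lemma corner_dot_nonneg' (a b c N : E3) (hNa : 0 ≤ dot3 N a) (hNb : 0 ≤ dot3 N b)
    (hNc : 0 ≤ dot3 N c) {y : E3} (hy : y ∈ corner a b c) : 0 ≤ dot3 N y := by
  obtain ⟨α, β, γ, hα, hβ, hγ, rfl⟩ := hy
  rw [dot3_lincomb']
  have := mul_nonneg hα hNa
  have := mul_nonneg hβ hNb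
  have := mul_nonneg hγ hNc
  linarith

private lemma ball_dot_ge' (a b c N : E3) (hNa : 0 ≤ dot3 N a) (hNb : 0 ≤ dot3 N b)
    (hNc : 0 ≤ dot3 N c) (hN0 : N ≠ 0) (x : E3) (r : ℝ) (hr : 0 < r)
    (hball : ball x r ⊆ corner a b c) : r * ‖N‖ ≤ dot3 N x := by
  set m : ℝ := ‖N‖ with hm
  have hm0 : 0 < m := norm_pos_iff.mpr hN0
  by_contra hlt
  push_neg at hlt
  set D := dot3 N x with hD
  have hD0 : 0 ≤ D := corner_dot_nonneg' a b c N hNa hNb hNc (hball (mem_ball_self hr))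
  set s : ℝ := (D / m + r) / 2 with hs
  have hs1 : 0 < s := by positivity
  have hDm : D / m < r := (div_lt_iff₀ hm0).mpr (by linarith)
  have hs2 : s < r := by rw [hs]; linarith
  have hs3 : D / m < s := by rw [hs]; linarith
  have hmem : x - s • (m⁻¹ • N) ∈ ball x r := by
    rw [mem_ball, dist_eq_norm]
    have : x - s • (m⁻¹ • N) - x = -(s • m⁻¹ • N) := by abel
    rw [this, norm_neg, norm_smul, norm_smul, norm_inv, norm_norm]
    simp [abs_of_pos hs1, abs_of_pos hm0]
    rw [inv_mul_cancel₀ (ne_of_gt hm0), mul_one]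
    exact hs2
  have h0 := corner_dot_nonneg' a b c N hNa hNb hNc (hball hmem)
  rw [dot3_sub_right', dot3_smul_right', dot3_smul_right', dot3_self'] at h0
  have heq : s * (m⁻¹ * m ^ 2) = s * m := by field_simp
  rw [heq] at h0
  have : D < s * m := (div_lt_iff₀ hm0).mp hs3
  linarith

private lemma final_dot' (a b c N : E3) (hNa : 0 ≤ dot3 N a) (hNb : 0 ≤ dot3 N b)
    (hNc : 0 ≤ dot3 N c) (hN0 : N ≠ 0) (x : E3) (r t μ : ℝ) (hr : 0 < r) (ht : 0 ≤ t)
    (hμ : μ * ‖N‖ ≤ dot3 N a + dot3 N b + dot3 N c)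
    (hball : ball x r ⊆ corner a b c)
    {y : E3} (hy : y ∈ ball (x + t • (a + b + c)) (r + μ * t)) : 0 ≤ dot3 N y := by
  set m : ℝ := ‖N‖ with hm
  have hm0 : 0 < m := norm_pos_iff.mpr hN0
  have h1 : r * m ≤ dot3 N x := ball_dot_ge' a b c N hNa hNb hNc hN0 x r hr hball
  set d : E3 := y - (x + t • (a + b + c)) with hd
  have hdist : ‖d‖ < r + μ * t := by
    rw [hd, ← dist_eq_norm]; exact mem_ball.mp hy
  have hdecomp : dot3 N y = dot3 N x + t * (dot3 N a + dot3 N b + dot3 N c) + dot3 N d := by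
    rw [hd, dot3_sub_right', dot3_add_right', dot3_smul_right', dot3_add_right',
      dot3_add_right']
    ring
  have habs : -(m * ‖d‖) ≤ dot3 N d := by
    have h := abs_dot3_le' N d
    have := neg_abs_le (dot3 N d)
    linarith
  have h2 : t * (μ * m) ≤ t * (dot3 N a + dot3 N b + dot3 N c) :=
    mul_le_mul_of_nonneg_left hμ ht
  have h3 : m * ‖d‖ ≤ m * (r + μ * t) := mul_le_mul_of_nonneg_left hdist.le hm0.le
  rw [hdecomp]
  nlinarith

private lemma cross_ne_zero_of_dot_pos (N v : E3) (h : 0 < dot3 N v) : N ≠ 0 := by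
  intro h0
  rw [h0] at h
  simp [dot3] at h

/-- dilation of balls inside the corner. If `B(x, r) ⊆ Ω` then for every
`t ≥ 0` one has `B(x + t(a+b+c), r + μt) ⊆ Ω`. -/
theorem ball_dilation_in_corner (a b c : E3) (h : GenericCorner a b c)
    (x : E3) (r : ℝ) (hr : 0 < r) (hx : x ∈ corner a b c)
    (hball : ball x r ⊆ corner a b c) :
    ∀ t : ℝ, 0 ≤ t →
      ball (x + t • (a + b + c)) (r + cornerMu a b c * t) ⊆ corner a b c := by
  obtain ⟨ha, hb, hc, hT1, hT2, hT3, -, -, -⟩ := h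
  -- the three inward normals
  set N1 := cross3 b c with hN1
  set N2 := cross3 c a with hN2
  set N3 := cross3 a b with hN3
  have h1b : dot3 N1 b = 0 := dot3_cross_left' b c
  have h1c : dot3 N1 c = 0 := dot3_cross_right' b c
  have h2c : dot3 N2 c = 0 := dot3_cross_left' c a
  have h2a : dot3 N2 a = 0 := dot3_cross_right' c a
  have h3a : dot3 N3 a = 0 := dot3_cross_left' a b
  have h3b : dot3 N3 b = 0 := dot3_cross_right' a b
  have hd1 : 0 < dot3 N1 a := hT2
  have hd2 : 0 < dot3 N2 b := hT3
  have hd3 : 0 < dot3 N3 c := hT1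
  have hn1 : N1 ≠ 0 := cross_ne_zero_of_dot_pos N1 a hd1
  have hn2 : N2 ≠ 0 := cross_ne_zero_of_dot_pos N2 b hd2
  have hn3 : N3 ≠ 0 := cross_ne_zero_of_dot_pos N3 c hd3
  have hm1 : 0 < ‖N1‖ := norm_pos_iff.mpr hn1
  have hm2 : 0 < ‖N2‖ := norm_pos_iff.mpr hn2
  have hm3 : 0 < ‖N3‖ := norm_pos_iff.mpr hn3
  set μ := cornerMu a b c with hμdef
  have hμ1 : μ * ‖N1‖ ≤ dot3 N1 a := by
    have hle : cornerMu a b c ≤ dot3 (‖cross3 b c‖⁻¹ • cross3 b c) a :=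
      le_trans (min_le_right _ _) (min_le_left _ _)
    rw [dot3_smul_left'] at hle
    rw [hμdef]
    calc cornerMu a b c * ‖N1‖ ≤ ‖N1‖⁻¹ * dot3 N1 a * ‖N1‖ :=
          mul_le_mul_of_nonneg_right hle hm1.le
      _ = dot3 N1 a := by field_simp
  have hμ2 : μ * ‖N2‖ ≤ dot3 N2 b := by
    have hle : cornerMu a b c ≤ dot3 (‖cross3 c a‖⁻¹ • cross3 c a) b :=
      le_trans (min_le_right _ _) (min_le_right _ _)
    rw [dot3_smul_left'] at hle
    rw [hμdef]
    calc cornerMu a b c * ‖N2‖ ≤ ‖N2‖⁻¹ * dot3 N2 b * ‖N2‖ :=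
          mul_le_mul_of_nonneg_right hle hm2.le
      _ = dot3 N2 b := by field_simp
  have hμ3 : μ * ‖N3‖ ≤ dot3 N3 c := by
    have hle : cornerMu a b c ≤ dot3 (‖cross3 a b‖⁻¹ • cross3 a b) c := min_le_left _ _
    rw [dot3_smul_left'] at hle
    rw [hμdef]
    calc cornerMu a b c * ‖N3‖ ≤ ‖N3‖⁻¹ * dot3 N3 c * ‖N3‖ :=
          mul_le_mul_of_nonneg_right hle hm3.le
      _ = dot3 N3 c := by field_simp
  intro t ht y hy
  apply mem_corner_of_dots' a b c hT1
  · exact final_dot' a b c N1 hd1.le h1b.ge h1c.ge hn1 x r t μ hr ht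
      (by rw [h1b, h1c]; linarith) hball hy
  · exact final_dot' a b c N2 h2a.ge hd2.le h2c.ge hn2 x r t μ hr ht
      (by rw [h2a, h2c]; linarith) hball hy
  · exact final_dot' a b c N3 h3a.ge h3b.ge hd3.le hn3 x r t μ hr ht
      (by rw [h3a, h3b]; linarith) hball hy

end
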